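/- The quantum Chernoff quantity between Poisson states in the Poisson limit: with ρ_M = ((1−N/M)τ₀ ⊕ (N/M)τ₁)^{⊗M}, ρ'_M = ((1−N'/M)τ₀ ⊕ (N'/M)τ₁')^{⊗M}, and s ∈ [0,1], lim_{M→∞} tr(ρ_M^s ρ'^{1−s}_M) = exp(−sN − (1−s)N' + N^s N'^{1−s} tr(τ₁^s τ₁'^{1−s})). -/

import Mathlib

open Matrix Kronecker ComplexOrder Filter

open Classical in
/-- Real power of a positive semidefinite matrix via the functional calculus, with the
convention `0 ^ s = 0` on the kernel (junk value `0` for non-PSD input). -/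
noncomputable def matRpow {n : Type*} [Fintype n] [DecidableEq n]
    (A : Matrix n n ℂ) (s : ℝ) : Matrix n n ℂ :=
  if h : A.PosSemidef then
    (h.1.eigenvectorUnitary : Matrix n n ℂ) *
      Matrix.diagonal (fun i =>
        ((if h.1.eigenvalues i = 0 then 0 else (h.1.eigenvalues i) ^ s : ℝ) : ℂ)) *
      (star h.1.eigenvectorUnitary : Matrix n n ℂ)
  else 0

/-- The quantum Chernoff quantity `C_s(A,B) = tr (A^s B^{1−s})`. -/
noncomputable def cher {n : Type*} [Fintype n] [DecidableEq n]
    (A B : Matrix n n ℂ) (s : ℝ) : ℂ :=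
  (matRpow A s * matRpow B (1 - s)).trace

/-- `M`-fold tensor power of a matrix, realized on the index set `Fin M → k`. -/
noncomputable def tpow {k : Type*} (τ : Matrix k k ℂ) (M : ℕ) :
    Matrix (Fin M → k) (Fin M → k) ℂ :=
  Matrix.of fun i j => ∏ m, τ (i m) (j m)

/-- The single-temporal-mode rare state `(1 − N/M) τ₀ ⊕ (N/M) τ₁`, where `τ₀` is the
unique density operator on a 1-dimensional space. -/
noncomputable def rareState {d : ℕ} (N : ℝ) (τ₁ : Matrix (Fin d) (Fin d) ℂ) (M : ℕ) :
    Matrix (Unit ⊕ Fin d) (Unit ⊕ Fin d) ℂ :=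
  Matrix.fromBlocks (((1 - N / M : ℝ) : ℂ) • 1) 0 0 (((N / M : ℝ) : ℂ) • τ₁)

open Polynomial in
noncomputable def rf (s : ℝ) (x : ℝ) : ℝ := if x = 0 then 0 else x ^ s

open Polynomial
section conj
variable {n : Type*} [Fintype n] [DecidableEq n]

lemma myConjPow (U X : Matrix n n ℂ) (hU : U * star U = 1) (k : ℕ) :
    (U * X * star U) ^ k = U * X ^ k * star U := by
  have hU' : star U * U = 1 := mul_eq_one_comm.mp hU
  induction k with
  | zero => simp [pow_zero, hU]
  | succ k ih =>
      rw [pow_succ, ih]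
      simp only [mul_assoc]
      rw [show star U * (U * (X * star U)) = X * star U by
        rw [← mul_assoc, hU', one_mul]]
      simp [pow_succ, mul_assoc]

lemma myAevalConj (U X : Matrix n n ℂ) (hU : U * star U = 1) (q : ℂ[X]) :
    Polynomial.aeval (U * X * star U) q = U * Polynomial.aeval X q * star U := by
  induction q using Polynomial.induction_on' with
  | add p r hp hr => rw [map_add, map_add, hp, hr, mul_add, add_mul]
  | monomial k a =>
      rw [Polynomial.aeval_monomial, Polynomial.aeval_monomial, myConjPow U X hU,
        Algebra.algebraMap_eq_smul_one]
      simp [smul_mul_assoc, mul_smul_comm]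

lemma myAevalDiagonal (g : n → ℂ) (q : ℂ[X]) :
    Polynomial.aeval (Matrix.diagonal g) q
      = Matrix.diagonal (fun i => q.eval (g i)) := by
  have h1 := Polynomial.aeval_algHom_apply (Matrix.diagonalAlgHom (R := ℂ) (n := n) (α := ℂ)) g q
  have h2 : Polynomial.aeval g q = fun i => q.eval (g i) := by
    funext i
    have h3 := Polynomial.aeval_algHom_apply (Pi.evalAlgHom ℂ (fun _ : n => ℂ) i) g q
    have : (Polynomial.aeval g q) i = Polynomial.aeval (g i) q := by
      exact h3.symm
    rw [this]
    simp [Polynomial.aeval_def, Polynomial.eval₂_eq_eval_map]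
  calc Polynomial.aeval (Matrix.diagonal g) q
      = Polynomial.aeval (Matrix.diagonalAlgHom (R := ℂ) (n := n) (α := ℂ) g) q := rfl
    _ = Matrix.diagonalAlgHom (R := ℂ) (n := n) (α := ℂ) (Polynomial.aeval g q) := h1
    _ = Matrix.diagonal (fun i => q.eval (g i)) := by rw [h2]; rfl

/-- Key well-definedness: `matRpow` computed from ANY unitary diagonalization. -/
lemma matRpow_eq_conj (A : Matrix n n ℂ) (hA : A.PosSemidef) (s : ℝ)
    (U : Matrix n n ℂ) (hU : U * star U = 1)
    (D : n → ℝ)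
    (hAU : A = U * Matrix.diagonal (fun i => (D i : ℂ)) * star U) :
    matRpow A s = U * Matrix.diagonal (fun i => ((rf s (D i)) : ℂ)) * star U := by
  classical
  set V : Matrix n n ℂ := (hA.1.eigenvectorUnitary : Matrix n n ℂ) with hV
  set E : n → ℝ := hA.1.eigenvalues with hE
  have hVu : V * star V = 1 := Matrix.mem_unitaryGroup_iff.mp hA.1.eigenvectorUnitary.2
  have hAV : A = V * Matrix.diagonal (fun i => (E i : ℂ)) * star V := by
    simpa [Function.comp_def] using hA.1.spectral_theorem
  set S : Finset ℝ := (Finset.univ.image D) ∪ (Finset.univ.image E) with hS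
  set p : ℝ[X] := Lagrange.interpolate S id (rf s) with hp
  have hpeval : ∀ x ∈ S, p.eval x = rf s x := fun x hx =>
    Lagrange.eval_interpolate_at_node (rf s) (Set.injOn_id _) hx
  set q : ℂ[X] := p.map (algebraMap ℝ ℂ) with hq
  have key : ∀ (W : Matrix n n ℂ), (W * star W = 1) → ∀ (G : n → ℝ),
      (∀ i, G i ∈ S) →
      A = W * Matrix.diagonal (fun i => (G i : ℂ)) * star W →
      Polynomial.aeval A q
        = W * Matrix.diagonal (fun i => ((rf s (G i)) : ℂ)) * star W := by
    intro W hW G hG hAW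
    rw [hAW, myAevalConj _ _ hW, myAevalDiagonal]
    have : (fun i => q.eval ((G i : ℂ))) = fun i => ((rf s (G i) : ℝ) : ℂ) := by
      funext i
      rw [hq, Polynomial.eval_map,
        show ((G i : ℂ)) = algebraMap ℝ ℂ (G i) from rfl, Polynomial.eval₂_at_apply]
      simp [hpeval (G i) (hG i)]
    rw [this]
  have h1 := key V hVu E (fun i => Finset.mem_union_right _
    (Finset.mem_image_of_mem E (Finset.mem_univ i))) hAV
  have h2 := key U hU D (fun i => Finset.mem_union_left _
    (Finset.mem_image_of_mem D (Finset.mem_univ i))) hAU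
  have hM : matRpow A s = V * Matrix.diagonal (fun i => ((rf s (E i)) : ℂ)) * star V := by
    rw [matRpow, dif_pos hA]
    rfl
  rw [hM, h1.symm, h2]

end conj

section tpow
variable {k : Type*} [Fintype k] [DecidableEq k] (M : ℕ)

lemma tpow_mul (A B : Matrix k k ℂ) : tpow (A * B) M = tpow A M * tpow B M := by
  funext i j
  simp only [tpow, Matrix.of_apply, Matrix.mul_apply]
  rw [Finset.prod_univ_sum, Fintype.piFinset_univ]
  exact Finset.sum_congr rfl fun x _ => Finset.prod_mul_distrib

lemma tpow_diagonal (g : k → ℂ) :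
    tpow (Matrix.diagonal g) M = Matrix.diagonal (fun i => ∏ m, g (i m)) := by
  funext i j
  simp only [tpow, Matrix.of_apply, Matrix.diagonal_apply]
  by_cases h : i = j
  · subst h
    simp
  · rw [if_neg h]
    obtain ⟨m, hm⟩ := Function.ne_iff.mp h
    exact Finset.prod_eq_zero (Finset.mem_univ m) (by rw [if_neg hm])

lemma tpow_star (A : Matrix k k ℂ) : tpow (star A) M = star (tpow A M) := by
  funext i j
  simp only [tpow, Matrix.of_apply, Matrix.star_apply, Matrix.star_eq_conjTranspose,
    Matrix.conjTranspose_apply]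
  exact (star_prod _ _).symm

lemma tpow_trace (A : Matrix k k ℂ) : (tpow A M).trace = A.trace ^ M := by
  have h := Finset.prod_univ_sum (κ := fun _ : Fin M => k)
    (fun _ => Finset.univ) (fun _ x => A x x)
  simp only [Matrix.trace, Matrix.diag, tpow, Matrix.of_apply]
  rw [← Fintype.piFinset_univ, ← h, Finset.prod_const, Finset.card_univ, Fintype.card_fin]

end tpow

section rfprops

lemma rf_nonneg (s x : ℝ) (hx : 0 ≤ x) : 0 ≤ rf s x := by
  unfold rf; split
  · exact le_refl 0
  · exact Real.rpow_nonneg hx s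

lemma rf_pos (s : ℝ) {x : ℝ} (hx : 0 < x) : rf s x = x ^ s := by
  unfold rf; rw [if_neg (ne_of_gt hx)]

lemma rf_mul (s : ℝ) {x y : ℝ} (hx : 0 ≤ x) (hy : 0 ≤ y) :
    rf s (x * y) = rf s x * rf s y := by
  unfold rf
  rcases eq_or_lt_of_le hx with h | h
  · simp [← h]
  rcases eq_or_lt_of_le hy with h' | h'
  · simp [← h']
  rw [if_neg (ne_of_gt h), if_neg (ne_of_gt h'), if_neg (ne_of_gt (mul_pos h h'))]
  exact Real.mul_rpow hx hy

lemma rf_one (s : ℝ) : rf s 1 = 1 := by simp [rf]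

lemma rf_prod (s : ℝ) {ι : Type*} (t : Finset ι) (g : ι → ℝ) (hg : ∀ i ∈ t, 0 ≤ g i) :
    rf s (∏ i ∈ t, g i) = ∏ i ∈ t, rf s (g i) := by
  induction t using Finset.cons_induction with
  | empty => simp [rf_one]
  | cons a t ha ih =>
      rw [Finset.prod_cons, Finset.prod_cons,
        rf_mul s (hg a (Finset.mem_cons_self a t))
          (Finset.prod_nonneg fun i hi => hg i (Finset.mem_cons_of_mem hi)),
        ih fun i hi => hg i (Finset.mem_cons_of_mem hi)]

end rfprops

section psd
variable {n : Type*} [Fintype n] [DecidableEq n]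

lemma psd_of_conj (U : Matrix n n ℂ) (D : n → ℝ) (hD : ∀ i, 0 ≤ D i) :
    (U * Matrix.diagonal (fun i => (D i : ℂ)) * star U).PosSemidef := by
  have hdiag : (Matrix.diagonal (fun i => (D i : ℂ))).PosSemidef := by
    rw [Matrix.posSemidef_diagonal_iff]
    intro i
    simpa using hD i
  simpa [Matrix.star_eq_conjTranspose] using hdiag.mul_mul_conjTranspose_same U

end psd

section tp2
variable {k : Type*} [Fintype k] [DecidableEq k]

lemma tpow_one (M : ℕ) : tpow (1 : Matrix k k ℂ) M = 1 := by
  rw [← Matrix.diagonal_one, tpow_diagonal]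
  simp

lemma tpow_unitary {U : Matrix k k ℂ} (hU : U * star U = 1) (M : ℕ) :
    tpow U M * star (tpow U M) = 1 := by
  rw [← tpow_star, ← tpow_mul, hU, tpow_one]

lemma tpow_decomp (A U : Matrix k k ℂ) (D : k → ℝ)
    (hAU : A = U * Matrix.diagonal (fun i => (D i : ℂ)) * star U) (M : ℕ) :
    tpow A M = tpow U M *
      Matrix.diagonal (fun i => ((∏ m, D (i m) : ℝ) : ℂ)) * star (tpow U M) := by
  rw [hAU, tpow_mul, tpow_mul, tpow_diagonal, tpow_star]
  congr 2
  funext i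
  push_cast
  rfl

lemma matRpow_tpow (A U : Matrix k k ℂ) (D : k → ℝ)
    (hU : U * star U = 1) (hD : ∀ i, 0 ≤ D i)
    (hAU : A = U * Matrix.diagonal (fun i => (D i : ℂ)) * star U) (s : ℝ) (M : ℕ) :
    matRpow (tpow A M) s = tpow (matRpow A s) M := by
  have hdec := tpow_decomp A U D hAU M
  have hpsd : (tpow A M).PosSemidef := by
    rw [hdec]; exact psd_of_conj _ _ fun i => Finset.prod_nonneg fun m _ => hD (i m)
  rw [matRpow_eq_conj (tpow A M) hpsd s (tpow U M) (tpow_unitary hU M) _ hdec]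
  have hA : A.PosSemidef := by rw [hAU]; exact psd_of_conj _ _ hD
  rw [matRpow_eq_conj A hA s U hU D hAU, tpow_mul, tpow_mul, tpow_diagonal, tpow_star]
  have heq : (fun i : Fin M → k => ((rf s (∏ m, D (i m)) : ℝ) : ℂ))
      = fun i : Fin M → k => ∏ m, ((rf s (D (i m)) : ℝ) : ℂ) := by
    funext i
    rw [rf_prod s Finset.univ _ fun m _ => hD (i m)]
    push_cast
    rfl
  rw [heq]

lemma cher_tpow (A B U U' : Matrix k k ℂ) (D D' : k → ℝ)
    (hU : U * star U = 1) (hD : ∀ i, 0 ≤ D i)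
    (hAU : A = U * Matrix.diagonal (fun i => (D i : ℂ)) * star U)
    (hU' : U' * star U' = 1) (hD' : ∀ i, 0 ≤ D' i)
    (hBU : B = U' * Matrix.diagonal (fun i => (D' i : ℂ)) * star U')
    (s : ℝ) (M : ℕ) :
    cher (tpow A M) (tpow B M) s = (cher A B s) ^ M := by
  unfold cher
  rw [matRpow_tpow A U D hU hD hAU s M, matRpow_tpow B U' D' hU' hD' hBU (1 - s) M,
    ← tpow_mul, tpow_trace]

end tp2

section rare
variable {d : ℕ}

lemma block_conj (V : Matrix (Fin d) (Fin d) ℂ) (g₁ : Unit → ℂ) (g₂ : Fin d → ℂ) :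
    Matrix.fromBlocks 1 0 0 V * Matrix.diagonal (Sum.elim g₁ g₂)
        * star (Matrix.fromBlocks 1 0 0 V)
      = Matrix.fromBlocks (Matrix.diagonal g₁) 0 0
          (V * Matrix.diagonal g₂ * star V) := by
  simp only [Matrix.star_eq_conjTranspose]
  rw [Matrix.fromBlocks_conjTranspose, ← Matrix.fromBlocks_diagonal,
    Matrix.fromBlocks_multiply, Matrix.fromBlocks_multiply]
  simp only [Matrix.conjTranspose_one, Matrix.conjTranspose_zero, Matrix.mul_one,
    Matrix.one_mul, Matrix.mul_zero, Matrix.zero_mul, add_zero, zero_add]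

lemma block_unitary {V : Matrix (Fin d) (Fin d) ℂ} (hV : V * star V = 1) :
    (Matrix.fromBlocks 1 0 0 V : Matrix (Unit ⊕ Fin d) (Unit ⊕ Fin d) ℂ)
      * star (Matrix.fromBlocks 1 0 0 V) = 1 := by
  rw [Matrix.star_eq_conjTranspose, Matrix.fromBlocks_conjTranspose]
  simp [Matrix.fromBlocks_multiply, ← Matrix.star_eq_conjTranspose, hV,
    Matrix.fromBlocks_one]

lemma diagonal_unit (c : ℂ) :
    Matrix.diagonal (fun _ : Unit => c) = c • (1 : Matrix Unit Unit ℂ) := by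
  rw [Matrix.smul_one_eq_diagonal]

/-- The diagonalization of `rareState`. -/
lemma rareState_decomp (N : ℝ) (τ₁ : Matrix (Fin d) (Fin d) ℂ)
    (V : Matrix (Fin d) (Fin d) ℂ) (E : Fin d → ℝ)
    (hdec : τ₁ = V * Matrix.diagonal (fun i => (E i : ℂ)) * star V) (M : ℕ) :
    rareState N τ₁ M
      = Matrix.fromBlocks 1 0 0 V
        * Matrix.diagonal (fun i => ((Sum.elim (fun _ : Unit => 1 - N/M)
            (fun j => (N/M) * E j) i : ℝ) : ℂ))
        * star (Matrix.fromBlocks 1 0 0 V) := by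
  have h1 : (fun i => ((Sum.elim (fun _ : Unit => 1 - N/M) (fun j => (N/M) * E j) i : ℝ) : ℂ))
      = Sum.elim (fun _ : Unit => ((1 - N/M : ℝ) : ℂ)) (fun j => (((N/M) * E j : ℝ) : ℂ)) := by
    funext i; cases i <;> rfl
  rw [h1, block_conj, rareState, diagonal_unit]
  congr 1
  have h2 : (fun j => (((N/M) * E j : ℝ) : ℂ)) = fun j => ((N/M : ℝ) : ℂ) * ((E j : ℝ) : ℂ) := by
    funext j; push_cast; ring
  rw [h2, show (fun j => ((N/M : ℝ) : ℂ) * ((E j : ℝ) : ℂ))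
      = ((N/M : ℝ) : ℂ) • (fun j => ((E j : ℝ) : ℂ)) from rfl,
    Matrix.diagonal_smul, Matrix.mul_smul, Matrix.smul_mul, hdec]

lemma trace_fromBlocks' (A : Matrix Unit Unit ℂ) (B : Matrix Unit (Fin d) ℂ)
    (C : Matrix (Fin d) Unit ℂ) (D : Matrix (Fin d) (Fin d) ℂ) :
    (Matrix.fromBlocks A B C D).trace = A.trace + D.trace := by
  simp [Matrix.trace, Matrix.diag, Fintype.sum_sum_type]

/-- `matRpow` of `rareState`. -/
lemma matRpow_rareState (N : ℝ) (τ₁ : Matrix (Fin d) (Fin d) ℂ)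
    (hτ₁ : τ₁.PosSemidef) (M : ℕ) (h1 : 0 < 1 - N/M) (h2 : 0 < N/M) (s : ℝ) :
    matRpow (rareState N τ₁ M) s
      = Matrix.fromBlocks ((((1 - N/M) ^ s : ℝ) : ℂ) • 1) 0 0
          ((((N/M) ^ s : ℝ) : ℂ) • matRpow τ₁ s) := by
  set V : Matrix (Fin d) (Fin d) ℂ := (hτ₁.1.eigenvectorUnitary : Matrix (Fin d) (Fin d) ℂ)
  set E : Fin d → ℝ := hτ₁.1.eigenvalues
  have hV : V * star V = 1 := Matrix.mem_unitaryGroup_iff.mp hτ₁.1.eigenvectorUnitary.2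
  have hdec : τ₁ = V * Matrix.diagonal (fun i => (E i : ℂ)) * star V := by
    simpa [Function.comp_def] using hτ₁.1.spectral_theorem
  have hE : ∀ i, 0 ≤ E i := fun i => hτ₁.eigenvalues_nonneg i
  have hdecR := rareState_decomp N τ₁ V E hdec M
  set G : Unit ⊕ Fin d → ℝ :=
    Sum.elim (fun _ : Unit => 1 - N/M) (fun j => (N/M) * E j) with hG
  have hGpos : ∀ i, 0 ≤ G i := by
    rintro (i | j)
    · exact le_of_lt h1
    · exact mul_nonneg (le_of_lt h2) (hE j)
  have hpsd : (rareState N τ₁ M).PosSemidef := by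
    rw [hdecR]; exact psd_of_conj _ _ hGpos
  rw [matRpow_eq_conj (rareState N τ₁ M) hpsd s _ (block_unitary hV) G hdecR]
  have hrfG : (fun i => ((rf s (G i) : ℝ) : ℂ))
      = Sum.elim (fun _ : Unit => (((1 - N/M) ^ s : ℝ) : ℂ))
          (fun j => (((N/M) ^ s : ℝ) : ℂ) * ((rf s (E j) : ℝ) : ℂ)) := by
    funext i
    cases i with
    | inl u => simp [hG, rf_pos s h1]
    | inr j =>
        simp only [hG, Sum.elim_inr]
        rw [rf_mul s (le_of_lt h2) (hE j), rf_pos s h2]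
        push_cast; ring
  rw [hrfG, block_conj, diagonal_unit]
  congr 1
  rw [show (fun j => (((N/M) ^ s : ℝ) : ℂ) * ((rf s (E j) : ℝ) : ℂ))
      = (((N/M) ^ s : ℝ) : ℂ) • (fun j => ((rf s (E j) : ℝ) : ℂ)) from rfl,
    Matrix.diagonal_smul, Matrix.mul_smul, Matrix.smul_mul]
  rw [matRpow_eq_conj τ₁ hτ₁ s V hV E hdec]

/-- The single-copy Chernoff quantity of rare states. -/
lemma cher_rareState (N N' : ℝ) (τ₁ τ₁' : Matrix (Fin d) (Fin d) ℂ)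
    (hτ₁ : τ₁.PosSemidef) (hτ₁' : τ₁'.PosSemidef) (M : ℕ)
    (h1 : 0 < 1 - N/M) (h2 : 0 < N/M) (h1' : 0 < 1 - N'/M) (h2' : 0 < N'/M) (s : ℝ) :
    cher (rareState N τ₁ M) (rareState N' τ₁' M) s
      = ((((1 - N/M) ^ s * (1 - N'/M) ^ (1 - s) : ℝ)) : ℂ)
        + (((N/M) ^ s * (N'/M) ^ (1 - s) : ℝ) : ℂ) * cher τ₁ τ₁' s := by
  unfold cher
  rw [matRpow_rareState N τ₁ hτ₁ M h1 h2 s,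
    matRpow_rareState N' τ₁' hτ₁' M h1' h2' (1 - s)]
  rw [Matrix.fromBlocks_multiply]
  simp only [Matrix.mul_zero, Matrix.zero_mul, add_zero, zero_add]
  rw [trace_fromBlocks']
  rw [Matrix.smul_mul, Matrix.mul_smul, one_mul, Matrix.smul_mul, Matrix.mul_smul]
  rw [Matrix.trace_smul, Matrix.trace_smul, Matrix.trace_smul, Matrix.trace_smul,
    Matrix.trace_one]
  simp only [smul_eq_mul, Fintype.card_unit, Nat.cast_one, mul_one]
  push_cast
  ring
end rare

section limitlemma
open Filter Topology

lemma tendsto_pow_exp_of_mul_sub_one (u : ℕ → ℂ) (L : ℂ)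
    (h : Filter.Tendsto (fun M : ℕ => (M : ℂ) * (u M - 1)) Filter.atTop (nhds L)) :
    Filter.Tendsto (fun M : ℕ => u M ^ M) Filter.atTop (nhds (Complex.exp L)) := by
  set v : ℕ → ℂ := fun M => u M - 1 with hv
  -- v → 0
  have hinv : Filter.Tendsto (fun M : ℕ => ((M : ℂ))⁻¹) Filter.atTop (nhds 0) := by
    have : Filter.Tendsto (fun M : ℕ => ((((M : ℝ))⁻¹ : ℝ) : ℂ)) Filter.atTop (nhds ((0 : ℝ) : ℂ)) :=
      (Complex.continuous_ofReal.tendsto _).comp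
        (tendsto_inv_atTop_zero.comp tendsto_natCast_atTop_atTop)
    simpa using this
  have hv0 : Filter.Tendsto v Filter.atTop (nhds 0) := by
    have hmul := hinv.mul h
    rw [zero_mul] at hmul
    refine hmul.congr' ?_
    filter_upwards [Filter.eventually_ge_atTop 1] with M hM
    have hMne : ((M : ℂ)) ≠ 0 := by
      exact Nat.cast_ne_zero.mpr (by omega : M ≠ 0)
    field_simp
    rfl
  have hsmall : ∀ᶠ M in Filter.atTop, ‖v M‖ < 1/2 := by
    have := hv0.norm
    rw [norm_zero] at this
    exact this.eventually_lt_const (by norm_num)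
  -- log limit
  have hlog : Filter.Tendsto (fun M : ℕ => (M : ℂ) * Complex.log (u M))
      Filter.atTop (nhds L) := by
    have hrem : Filter.Tendsto
        (fun M : ℕ => (M : ℂ) * (Complex.log (1 + v M) - v M)) Filter.atTop (nhds 0) := by
      have hb : Filter.Tendsto (fun M : ℕ => ‖(M : ℂ) * v M‖ * ‖v M‖)
          Filter.atTop (nhds (‖L‖ * 0)) := by
        have h1 := h.norm
        have h2 := hv0.norm
        rw [norm_zero] at h2
        exact h1.mul h2
      rw [mul_zero] at hb
      apply squeeze_zero_norm' _ hb
      filter_upwards [hsmall] with M hM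
      have hlt : ‖v M‖ < 1 := lt_trans hM (by norm_num)
      have hbound := Complex.norm_log_one_add_sub_self_le hlt
      have hc : ‖v M‖ ^ 2 * (1 - ‖v M‖)⁻¹ / 2 ≤ ‖v M‖ ^ 2 := by
        have h3 : (1 - ‖v M‖)⁻¹ ≤ 2 := by
          rw [inv_le_comm₀ (by linarith) (by norm_num)]
          linarith
        nlinarith [sq_nonneg ‖v M‖]
      calc ‖(M : ℂ) * (Complex.log (1 + v M) - v M)‖
          = (M : ℝ) * ‖Complex.log (1 + v M) - v M‖ := by
            rw [norm_mul]; simp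
        _ ≤ (M : ℝ) * (‖v M‖ ^ 2) := by
            apply mul_le_mul_of_nonneg_left (le_trans hbound hc) (by positivity)
        _ = ‖(M : ℂ) * v M‖ * ‖v M‖ := by
            rw [norm_mul]; simp [sq]; ring
    have : Filter.Tendsto
        (fun M : ℕ => (M : ℂ) * v M + (M : ℂ) * (Complex.log (1 + v M) - v M))
        Filter.atTop (nhds (L + 0)) := h.add hrem
    rw [add_zero] at this
    refine this.congr ?_
    intro M
    rw [hv]
    ring_nf
  -- conclude
  have := hlog.cexp
  refine this.congr' ?_
  filter_upwards [hsmall] with M hM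
  have hne : u M ≠ 0 := by
    intro h0
    have hM' : ‖u M - 1‖ < 1/2 := hM
    rw [h0] at hM'
    norm_num at hM' 
  rw [show (M : ℂ) * Complex.log (u M) = (M : ℕ) * Complex.log (u M) by norm_cast,
    Complex.exp_nat_mul]
  rw [Complex.exp_log hne]

end limitlemma

section realanalysis
open Filter Topology

lemma psi_eq (N N' s : ℝ) (hN : 0 < N) (hN' : 0 < N') {M : ℕ} (hM : 1 ≤ M) :
    (M : ℝ) * ((N / M) ^ s * (N' / M) ^ (1 - s)) = N ^ s * N' ^ (1 - s) := by
  have hMpos : (0 : ℝ) < M := by exact_mod_cast hM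
  rw [Real.div_rpow hN.le hMpos.le, Real.div_rpow hN'.le hMpos.le, div_mul_div_comm,
    ← Real.rpow_add hMpos, show s + (1 - s) = 1 by ring, Real.rpow_one]
  field_simp

lemma tendsto_phi (N N' s : ℝ) :
    Filter.Tendsto
      (fun M : ℕ => (M : ℝ) * ((1 - N / M) ^ s * (1 - N' / M) ^ (1 - s) - 1))
      Filter.atTop (nhds (-(s * N) - (1 - s) * N')) := by
  set φ : ℝ → ℝ := fun t => (1 - N * t) ^ s * (1 - N' * t) ^ (1 - s) with hφ
  have hf1 : HasDerivAt (fun t : ℝ => 1 - N * t) (-N) 0 := by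
    have h := ((hasDerivAt_id (0 : ℝ)).const_mul N).const_sub 1
    simpa using h
  have hf2 : HasDerivAt (fun t : ℝ => 1 - N' * t) (-N') 0 := by
    have h := ((hasDerivAt_id (0 : ℝ)).const_mul N').const_sub 1
    simpa using h
  have hg1 : HasDerivAt (fun x : ℝ => x ^ s) (s * (1 : ℝ) ^ (s - 1)) (1 : ℝ) :=
    Real.hasDerivAt_rpow_const (Or.inl one_ne_zero)
  have hg2 : HasDerivAt (fun x : ℝ => x ^ (1 - s)) ((1 - s) * (1 : ℝ) ^ (1 - s - 1)) (1 : ℝ) :=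
    Real.hasDerivAt_rpow_const (Or.inl one_ne_zero)
  have hc1 : HasDerivAt (fun t : ℝ => (1 - N * t) ^ s) (s * (-N)) 0 := by
    have h := HasDerivAt.comp (0 : ℝ) (by simpa using hg1) hf1
    simpa [Function.comp_def] using h
  have hc2 : HasDerivAt (fun t : ℝ => (1 - N' * t) ^ (1 - s)) ((1 - s) * (-N')) 0 := by
    have h := HasDerivAt.comp (0 : ℝ) (by simpa using hg2) hf2
    simpa [Function.comp_def] using h
  have hd : HasDerivAt φ (-(s * N) - (1 - s) * N') 0 := by
    have h := hc1.mul hc2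
    simp only [mul_zero, sub_zero, Real.one_rpow, mul_one, one_mul] at h
    rw [show -(s * N) - (1 - s) * N' = s * -N + (1 - s) * -N' by ring]
    exact h
  have hslope := hasDerivAt_iff_tendsto_slope.mp hd
  have ht : Filter.Tendsto (fun M : ℕ => ((M : ℝ))⁻¹) Filter.atTop (nhdsWithin 0 {(0:ℝ)}ᶜ) := by
    rw [tendsto_nhdsWithin_iff]
    constructor
    · exact tendsto_inv_atTop_zero.comp tendsto_natCast_atTop_atTop
    · filter_upwards [Filter.eventually_ge_atTop 1] with M hM
      have : (0 : ℝ) < M := by exact_mod_cast hM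
      simp [Set.mem_compl_iff, inv_ne_zero (ne_of_gt this)]
  have hcomp := hslope.comp ht
  refine hcomp.congr' ?_
  filter_upwards [Filter.eventually_ge_atTop 1] with M hM
  have hMpos : (0 : ℝ) < M := by exact_mod_cast hM
  have hφ0 : φ 0 = 1 := by simp [hφ, Real.one_rpow]
  show slope φ 0 ((M : ℝ))⁻¹ = (M : ℝ) * ((1 - N / M) ^ s * (1 - N' / M) ^ (1 - s) - 1)
  rw [slope_def_field, hφ0, hφ]
  simp only [div_eq_mul_inv, sub_zero, inv_inv]
  ring

end realanalysis

/-- The quantum Chernoff quantity between Poisson states in the Poisson limit. -/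
theorem poisson_states_chernoff {d : ℕ} (τ₁ τ₁' : Matrix (Fin d) (Fin d) ℂ)
    (hτ₁ : τ₁.PosSemidef) (hτ₁tr : τ₁.trace = 1)
    (hτ₁' : τ₁'.PosSemidef) (hτ₁'tr : τ₁'.trace = 1)
    (N N' : ℝ) (hN : 0 < N) (hN' : 0 < N')
    (s : ℝ) (hs0 : 0 ≤ s) (hs1 : s ≤ 1) :
    Filter.Tendsto
      (fun M : ℕ => cher (tpow (rareState N τ₁ M) M) (tpow (rareState N' τ₁' M) M) s)
      Filter.atTop
      (nhds (Complex.exp (((-(s * N) - (1 - s) * N' : ℝ) : ℂ)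
        + ((N ^ s * N' ^ (1 - s) : ℝ) : ℂ) * cher τ₁ τ₁' s))) := by

  classical
  set c : ℂ := cher τ₁ τ₁' s with hc
  set V : Matrix (Fin d) (Fin d) ℂ := (hτ₁.1.eigenvectorUnitary : Matrix (Fin d) (Fin d) ℂ)
  set E : Fin d → ℝ := hτ₁.1.eigenvalues
  set V' : Matrix (Fin d) (Fin d) ℂ := (hτ₁'.1.eigenvectorUnitary : Matrix (Fin d) (Fin d) ℂ)
  set E' : Fin d → ℝ := hτ₁'.1.eigenvalues
  have hV : V * star V = 1 := Matrix.mem_unitaryGroup_iff.mp hτ₁.1.eigenvectorUnitary.2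
  have hV' : V' * star V' = 1 := Matrix.mem_unitaryGroup_iff.mp hτ₁'.1.eigenvectorUnitary.2
  have hdec : τ₁ = V * Matrix.diagonal (fun i => (E i : ℂ)) * star V := by
    simpa [Function.comp_def] using hτ₁.1.spectral_theorem
  have hdec' : τ₁' = V' * Matrix.diagonal (fun i => (E' i : ℂ)) * star V' := by
    simpa [Function.comp_def] using hτ₁'.1.spectral_theorem
  have hE : ∀ i, 0 ≤ E i := fun i => hτ₁.eigenvalues_nonneg i
  have hE' : ∀ i, 0 ≤ E' i := fun i => hτ₁'.eigenvalues_nonneg i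
  set L : ℂ := ((-(s * N) - (1 - s) * N' : ℝ) : ℂ) + ((N ^ s * N' ^ (1 - s) : ℝ) : ℂ) * c with hL
  set z : ℕ → ℂ := fun M => (((1 - N / M) ^ s * (1 - N' / M) ^ (1 - s) : ℝ) : ℂ)
      + (((N / M) ^ s * (N' / M) ^ (1 - s) : ℝ) : ℂ) * c with hz
  have hev : ∀ᶠ M : ℕ in Filter.atTop, N < (M : ℝ) ∧ N' < (M : ℝ) ∧ 1 ≤ M := by
    have e1 : ∀ᶠ M : ℕ in Filter.atTop, N < (M : ℝ) :=
      tendsto_natCast_atTop_atTop.eventually_gt_atTop N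
    have e2 : ∀ᶠ M : ℕ in Filter.atTop, N' < (M : ℝ) :=
      tendsto_natCast_atTop_atTop.eventually_gt_atTop N'
    filter_upwards [e1, e2, Filter.eventually_ge_atTop 1] with M h1 h2 h3
    exact ⟨h1, h2, h3⟩
  -- eventual equality with z^M
  have hcongr : ∀ᶠ M : ℕ in Filter.atTop,
      cher (tpow (rareState N τ₁ M) M) (tpow (rareState N' τ₁' M) M) s = z M ^ M := by
    filter_upwards [hev] with M hM
    obtain ⟨hM1, hM2, hM3⟩ := hM
    have hMpos : (0 : ℝ) < M := lt_trans hN hM1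
    have h1 : 0 < 1 - N / M := by rw [sub_pos]; exact (div_lt_one hMpos).mpr hM1
    have h2 : 0 < N / M := div_pos hN hMpos
    have h1' : 0 < 1 - N' / M := by rw [sub_pos]; exact (div_lt_one hMpos).mpr hM2
    have h2' : 0 < N' / M := div_pos hN' hMpos
    have hd1 := rareState_decomp N τ₁ V E hdec M
    have hd2 := rareState_decomp N' τ₁' V' E' hdec' M
    have hGnn : ∀ i : Unit ⊕ Fin d,
        0 ≤ Sum.elim (fun _ : Unit => 1 - N / M) (fun j => (N / M) * E j) i := by
      rintro (u | j)
      · exact le_of_lt h1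
      · exact mul_nonneg (le_of_lt h2) (hE j)
    have hGnn' : ∀ i : Unit ⊕ Fin d,
        0 ≤ Sum.elim (fun _ : Unit => 1 - N' / M) (fun j => (N' / M) * E' j) i := by
      rintro (u | j)
      · exact le_of_lt h1'
      · exact mul_nonneg (le_of_lt h2') (hE' j)
    rw [cher_tpow (rareState N τ₁ M) (rareState N' τ₁' M)
        (Matrix.fromBlocks 1 0 0 V) (Matrix.fromBlocks 1 0 0 V')
        (Sum.elim (fun _ : Unit => 1 - N / M) (fun j => (N / M) * E j))
        (Sum.elim (fun _ : Unit => 1 - N' / M) (fun j => (N' / M) * E' j))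
        (block_unitary hV) hGnn hd1 (block_unitary hV') hGnn' hd2 s M,
      cher_rareState N N' τ₁ τ₁' hτ₁ hτ₁' M h1 h2 h1' h2' s]
  -- the limit of M * (z M - 1)
  have hmain : Filter.Tendsto (fun M : ℕ => (M : ℂ) * (z M - 1)) Filter.atTop (nhds L) := by
    have hA := tendsto_phi N N' s
    have hAc : Filter.Tendsto
        (fun M : ℕ => (((M : ℝ) * ((1 - N / M) ^ s * (1 - N' / M) ^ (1 - s) - 1) : ℝ) : ℂ))
        Filter.atTop (nhds ((-(s * N) - (1 - s) * N' : ℝ) : ℂ)) :=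
      (Complex.continuous_ofReal.tendsto _).comp hA
    have hB : Filter.Tendsto
        (fun M : ℕ => (((M : ℝ) * ((N / M) ^ s * (N' / M) ^ (1 - s)) : ℝ) : ℂ) * c)
        Filter.atTop (nhds (((N ^ s * N' ^ (1 - s) : ℝ) : ℂ) * c)) := by
      refine Filter.Tendsto.congr' ?_ tendsto_const_nhds
      filter_upwards [Filter.eventually_ge_atTop 1] with M hM
      rw [psi_eq N N' s hN hN' hM]
    have hsum := hAc.add hB
    refine hsum.congr' ?_
    filter_upwards [Filter.eventually_ge_atTop 1] with M hM
    rw [hz]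
    push_cast
    ring
  have hcongr2 : (fun M : ℕ => z M ^ M) =ᶠ[Filter.atTop]
      fun M : ℕ => cher (tpow (rareState N τ₁ M) M) (tpow (rareState N' τ₁' M) M) s := by
    filter_upwards [hcongr] with M hM
    exact hM.symm
  exact Filter.Tendsto.congr' hcongr2 (tendsto_pow_exp_of_mul_sub_one z L hmain)
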